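/- Let T > 0, let H_L, H_R : ℝ^{d+1} → ℝ be continuous, quasiconvex and coercive, and let H_0 : ℝ^{d+1} → ℝ be continuous and coercive. Let u : (0,T) × ℝ^{d+1} → ℝ be upper semicontinuous and suppose that for every C¹ function φ : (0,T) × ℝ^{d+1} → ℝ and every point (t,X) ∈ (0,T) × ℝ^{d+1} at which u − φ attains a local maximum with u(t,X) = φ(t,X), writing X = (x', x_{d+1}) with x' ∈ ℝ^d, one has: ∂_t φ(t,X) + H_L(D_X φ(t,X)) ≤ 0 if x_{d+1} < 0; ∂_t φ(t,X) + H_R(D_X φ(t,X)) ≤ 0 if x_{d+1} > 0; and ∂_t φ(t,X) + H_0(D_X φ(t,X)) ≤ 0 if x_{d+1} = 0. Then for every t ∈ (0,T) and x' ∈ ℝ^d, u(t,(x',0)) = limsup_{(s,Y) → (t,(x',0)), y_{d+1} > 0} u(s,Y) = limsup_{(s,Y) → (t,(x',0)), y_{d+1} < 0} u(s,Y), where Y = (y', y_{d+1}). -/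

import Mathlib

open Filter Set Metric

open Filter Set Metric

/-- An upper semicontinuous real function attains its max on a nonempty compact set. -/
lemma usc_exists_max {X : Type*} [TopologicalSpace X] {s : Set X} (hs : IsCompact s)
    (hne : s.Nonempty) {f : X → ℝ} (hf : UpperSemicontinuousOn f s) :
    ∃ x ∈ s, ∀ y ∈ s, f y ≤ f x := by
  by_contra hcon
  push_neg at hcon
  choose g hg hlt using hcon
  have h1 : ∀ x (hx : x ∈ s), ∃ V ∈ nhds x, ∀ z ∈ V, z ∈ s → f z < f (g x hx) := by
    intro x hx
    have h2 := hf x hx (f (g x hx)) (hlt x hx)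
    rw [eventually_nhdsWithin_iff] at h2
    exact h2.exists_mem
  choose V hV hVlt using h1
  rcases hs.elim_nhds_subcover' V hV with ⟨t, ht⟩
  have htne : t.Nonempty := by
    rcases hne with ⟨x, hx⟩
    rcases Set.mem_iUnion₂.1 (ht hx) with ⟨i, hi, _⟩
    exact ⟨i, hi⟩
  obtain ⟨i0, hi0, hmax⟩ := t.exists_max_image (fun i => f (g i.1 i.2)) htne
  have hy : (g i0.1 i0.2) ∈ s := hg _ _
  rcases Set.mem_iUnion₂.1 (ht hy) with ⟨j, hj, hyV⟩
  have h3 := hVlt j.1 j.2 _ hyV hy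
  have h4 := hmax j hj
  linarith

/-- limsup equality from an upper bound and frequent lower bounds. -/
lemma limsup_eq_of_freq {ι : Type*} {F : Filter ι} [F.NeBot] {u : ι → ℝ} {c : ℝ}
    (hub : ∀ δ : ℝ, 0 < δ → ∀ᶠ q in F, u q < c + δ)
    (hfreq : ∀ ε : ℝ, 0 < ε → ∃ᶠ q in F, c - ε < u q) :
    c = Filter.limsup u F := by
  have hbdd : F.IsBoundedUnder (· ≤ ·) u :=
    ⟨c + 1, by
      rw [Filter.eventually_map]
      exact (hub 1 one_pos).mono fun q h => h.le⟩
  have hcob : F.IsCoboundedUnder (· ≤ ·) u :=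
    Filter.IsCoboundedUnder.of_frequently_ge (a := c - 1)
      ((hfreq 1 one_pos).mono fun q h => h.le)
  have h1 : ∀ ε : ℝ, 0 < ε → c - ε ≤ Filter.limsup u F := fun ε hε =>
    Filter.le_limsup_of_frequently_le ((hfreq ε hε).mono fun q h => h.le) hbdd
  have h2 : ∀ δ : ℝ, 0 < δ → Filter.limsup u F ≤ c + δ := fun δ hδ =>
    Filter.limsup_le_of_le hcob ((hub δ hδ).mono fun q h => h.le)
  have hle : c ≤ Filter.limsup u F := by
    by_contra h
    push_neg at h
    have := h1 ((c - Filter.limsup u F) / 2) (by linarith)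
    linarith
  have hge : Filter.limsup u F ≤ c := by
    by_contra h
    push_neg at h
    have := h2 ((Filter.limsup u F - c) / 2) (by linarith)
    linarith
  linarith


open Filter Set Metric

set_option maxHeartbeats 4000000 in
lemma key_freq (d : ℕ) (T : ℝ)
    (HA HB : EuclideanSpace ℝ (Fin d) × ℝ → ℝ)
    (hAcoer : ∀ M : ℝ, ∃ R : ℝ, ∀ P : EuclideanSpace ℝ (Fin d) × ℝ, R ≤ ‖P‖ → M ≤ HA P)
    (hBcoer : ∀ M : ℝ, ∃ R : ℝ, ∀ P : EuclideanSpace ℝ (Fin d) × ℝ, R ≤ ‖P‖ → M ≤ HB P)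
    (u : ℝ × (EuclideanSpace ℝ (Fin d) × ℝ) → ℝ)
    (husc : UpperSemicontinuousOn u
      (Set.Ioo 0 T ×ˢ (Set.univ : Set (EuclideanSpace ℝ (Fin d) × ℝ))))
    (sig : ℝ) (hsig : sig = 1 ∨ sig = -1)
    (hsub' : ∀ φ : ℝ × (EuclideanSpace ℝ (Fin d) × ℝ) → ℝ, ContDiff ℝ 1 φ →
      ∀ (t : ℝ) (X : EuclideanSpace ℝ (Fin d) × ℝ), t ∈ Set.Ioo 0 T →
      u (t, X) = φ (t, X) →
      (∀ᶠ q in nhdsWithin (t, X)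
          (Set.Ioo 0 T ×ˢ (Set.univ : Set (EuclideanSpace ℝ (Fin d) × ℝ))),
        u q ≤ φ q) →
      ((sig * X.2 < 0 → deriv (fun s => φ (s, X)) t +
          HA (gradient (fun y' => φ (t, (y', X.2))) X.1,
              deriv (fun y => φ (t, (X.1, y))) X.2) ≤ 0) ∧
       (X.2 = 0 → deriv (fun s => φ (s, X)) t +
          HB (gradient (fun y' => φ (t, (y', X.2))) X.1,
              deriv (fun y => φ (t, (X.1, y))) X.2) ≤ 0)))
    (t0 : ℝ) (ht0 : t0 ∈ Set.Ioo 0 T) (x0 : EuclideanSpace ℝ (Fin d))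
    (ε : ℝ) (hε : 0 < ε) :
    ∃ᶠ q in nhdsWithin (t0, (x0, (0 : ℝ)))
        {q : ℝ × (EuclideanSpace ℝ (Fin d) × ℝ) | q.1 ∈ Set.Ioo 0 T ∧ 0 < sig * q.2.2},
      u (t0, (x0, (0 : ℝ))) - ε < u q := by
  set D : Set (ℝ × (EuclideanSpace ℝ (Fin d) × ℝ)) :=
    Set.Ioo 0 T ×ˢ (Set.univ : Set (EuclideanSpace ℝ (Fin d) × ℝ)) with hD
  set p0 : ℝ × (EuclideanSpace ℝ (Fin d) × ℝ) := (t0, (x0, (0 : ℝ))) with hp0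
  set c0 : ℝ := u p0 with hc0
  have hsig2 : sig * sig = 1 := by rcases hsig with h | h <;> rw [h] <;> norm_num
  have hsigabs : |sig| = 1 := by rcases hsig with h | h <;> rw [h] <;> norm_num
  by_contra hcon
  rw [Filter.not_frequently] at hcon
  rw [eventually_nhdsWithin_iff] at hcon
  have hcon' : ∀ᶠ q in nhds p0,
      (q.1 ∈ Set.Ioo 0 T ∧ 0 < sig * q.2.2) → u q ≤ c0 - ε :=
    hcon.mono fun q h hq => le_of_not_gt (h hq)
  rcases Metric.eventually_nhds_iff.1 hcon' with ⟨r0, hr0, hdrop⟩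
  -- upper semicontinuity near p0
  have hp0D : p0 ∈ D := ⟨ht0, trivial⟩
  have hDopen : IsOpen D := isOpen_Ioo.prod isOpen_univ
  have husc0 : ∀ᶠ q in nhds p0, u q < c0 + 1 := by
    have h := husc p0 hp0D (c0 + 1) (by linarith)
    rwa [hDopen.nhdsWithin_eq hp0D] at h
  rcases Metric.eventually_nhds_iff.1 husc0 with ⟨r1, hr1, hbd⟩
  -- choice of radius
  obtain ⟨r, hrdef⟩ : ∃ r : ℝ, r = min (min (r1 / 2) (r0 / 2)) (min (t0 / 2) ((T - t0) / 2)) :=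
    ⟨_, rfl⟩
  have hr : 0 < r := by
    have h1 := ht0.1
    have h2 := ht0.2
    rw [hrdef]
    simp only [lt_min_iff]
    refine ⟨⟨by linarith, by linarith⟩, by linarith, by linarith⟩
  have hrr1 : r < r1 := by
    have h : r ≤ r1 / 2 := by rw [hrdef]; exact (min_le_left _ _).trans (min_le_left _ _)
    linarith
  have hrr0 : r < r0 := by
    have h : r ≤ r0 / 2 := by rw [hrdef]; exact (min_le_left _ _).trans (min_le_right _ _)
    linarith
  have hrt0 : r ≤ t0 / 2 := by
    rw [hrdef]; exact (min_le_right _ _).trans (min_le_left _ _)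
  have hrT : r ≤ (T - t0) / 2 := by
    rw [hrdef]; exact (min_le_right _ _).trans (min_le_right _ _)
  -- constants
  obtain ⟨B, hBdef⟩ : ∃ B : ℝ, B = 6 / r ^ 2 + 1 := ⟨_, rfl⟩
  have hBpos : 0 < B := by rw [hBdef]; positivity
  obtain ⟨RA, hRA⟩ := hAcoer (2 + 2 * B * r)
  obtain ⟨RB, hRB⟩ := hBcoer (2 + 2 * B * r)
  obtain ⟨lam, hlamdef⟩ : ∃ lam : ℝ, lam = max 1 (max RA RB) := ⟨_, rfl⟩
  have hlam1 : (1 : ℝ) ≤ lam := by rw [hlamdef]; exact le_max_left _ _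
  have hlampos : 0 < lam := lt_of_lt_of_le one_pos hlam1
  have hlamA : RA ≤ lam := by
    rw [hlamdef]; exact (le_max_left _ _).trans (le_max_right _ _)
  have hlamB : RB ≤ lam := by
    rw [hlamdef]; exact (le_max_right _ _).trans (le_max_right _ _)
  obtain ⟨K, hKdef⟩ : ∃ K : ℝ, K = lam ^ 2 + (1 + lam * r) / r ^ 2 + lam ^ 2 / (4 * ε) + 1 :=
    ⟨_, rfl⟩
  have hKpos : 0 < K := by
    rw [hKdef]
    have h1 : 0 ≤ (1 + lam * r) / r ^ 2 := by positivity
    positivity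
  have hK1 : lam ^ 2 ≤ K := by
    have h1 : 0 ≤ (1 + lam * r) / r ^ 2 := by positivity
    have h2 : 0 ≤ lam ^ 2 / (4 * ε) := by positivity
    rw [hKdef]; linarith
  have hK2 : 1 + lam * r < K * r ^ 2 := by
    have hr2 : (0:ℝ) < r ^ 2 := by positivity
    have h1 : (1 + lam * r) / r ^ 2 * r ^ 2 = 1 + lam * r := by field_simp
    have h2 : 0 ≤ lam ^ 2 * r ^ 2 := by positivity
    have h3 : 0 ≤ lam ^ 2 / (4 * ε) * r ^ 2 := by positivity
    rw [hKdef]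
    nlinarith
  have hK3 : lam ^ 2 < 4 * K * ε := by
    have h1 : lam ^ 2 / (4 * ε) * (4 * ε) = lam ^ 2 := by field_simp
    have h2 : 0 ≤ lam ^ 2 * (4 * ε) := by positivity
    have h3 : 0 ≤ (1 + lam * r) / r ^ 2 * (4 * ε) := by positivity
    rw [hKdef]
    nlinarith
  -- the test function
  obtain ⟨φ, hφdef⟩ : ∃ φ : ℝ × (EuclideanSpace ℝ (Fin d) × ℝ) → ℝ, φ = fun q =>
      c0 + B * (q.1 - t0) ^ 2 + B * ‖q.2.1 - x0‖ ^ 2 + K * q.2.2 ^ 2 - sig * lam * q.2.2 :=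
    ⟨_, rfl⟩
  have hφC1 : ContDiff ℝ 1 φ := by
    rw [hφdef]
    refine ContDiff.sub (ContDiff.add (ContDiff.add (ContDiff.add contDiff_const ?_) ?_) ?_) ?_
    · exact contDiff_const.mul ((contDiff_fst.sub contDiff_const).pow 2)
    · exact contDiff_const.mul
        (((contDiff_fst.comp contDiff_snd).sub contDiff_const).norm_sq ℝ)
    · exact contDiff_const.mul ((contDiff_snd.comp contDiff_snd).pow 2)
    · exact contDiff_const.mul (contDiff_snd.comp contDiff_snd)
  -- basic facts on the closed ball
  have hcoord : ∀ q : ℝ × (EuclideanSpace ℝ (Fin d) × ℝ), q ∈ Metric.closedBall p0 r →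
      |q.1 - t0| ≤ r ∧ ‖q.2.1 - x0‖ ≤ r ∧ |q.2.2| ≤ r := by
    intro q hq
    rw [Metric.mem_closedBall, Prod.dist_eq, Prod.dist_eq, max_le_iff, max_le_iff] at hq
    refine ⟨?_, ?_, ?_⟩
    · simpa [Real.dist_eq] using hq.1
    · simpa [dist_eq_norm] using hq.2.1
    · simpa [Real.dist_eq, hp0] using hq.2.2
  have htime : ∀ q : ℝ × (EuclideanSpace ℝ (Fin d) × ℝ), q ∈ Metric.closedBall p0 r → q.1 ∈ Set.Ioo 0 T := by
    intro q hq
    have h := (hcoord q hq).1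
    rw [abs_le] at h
    constructor <;> [linarith [ht0.1]; linarith [ht0.2]]
  have hub : ∀ q : ℝ × (EuclideanSpace ℝ (Fin d) × ℝ), q ∈ Metric.closedBall p0 r → u q < c0 + 1 := by
    intro q hq
    exact hbd (lt_of_le_of_lt (Metric.mem_closedBall.1 hq) hrr1)
  -- Claim 1 : on the `sig`-positive side, u - φ < 0
  have hclaim1 : ∀ q : ℝ × (EuclideanSpace ℝ (Fin d) × ℝ), q ∈ Metric.closedBall p0 r → 0 < sig * q.2.2 →
      u q - φ q < 0 := by
    intro q hq hpos
    have hdropq : u q ≤ c0 - ε :=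
      hdrop (lt_of_le_of_lt (Metric.mem_closedBall.1 hq) hrr0) ⟨htime q hq, hpos⟩
    have habs : sig * q.2.2 = |q.2.2| := by
      rcases hsig with h | h <;> rw [h] at hpos ⊢
      · rw [one_mul] at hpos ⊢; exact (abs_of_pos hpos).symm
      · have : q.2.2 < 0 := by linarith
        rw [abs_of_neg this]; ring
    have h1 : 0 ≤ B * (q.1 - t0) ^ 2 := mul_nonneg hBpos.le (sq_nonneg _)
    have h2 : 0 ≤ B * ‖q.2.1 - x0‖ ^ 2 := mul_nonneg hBpos.le (sq_nonneg _)
    have hy2 : q.2.2 ^ 2 = |q.2.2| ^ 2 := (sq_abs _).symm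
    have hkey : lam * |q.2.2| - K * q.2.2 ^ 2 < ε := by
      have h4 : 4 * K * (lam * |q.2.2| - K * |q.2.2| ^ 2) ≤ lam ^ 2 := by
        nlinarith [sq_nonneg (2 * K * |q.2.2| - lam)]
      have h5 : 4 * K * (lam * |q.2.2| - K * |q.2.2| ^ 2) < 4 * K * ε := by linarith
      have h6 := lt_of_mul_lt_mul_left h5 (by linarith : (0:ℝ) ≤ 4 * K)
      nlinarith [hy2]
    have hphi : sig * lam * q.2.2 = lam * |q.2.2| := by
      rw [← habs]; ring
    simp only [hφdef]
    linarith [hdropq, hkey, hphi, h1, h2]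
  -- maximize u - φ on the closed ball
  have hcompact : IsCompact (Metric.closedBall p0 r) := isCompact_closedBall _ _
  have hcbD : Metric.closedBall p0 r ⊆ D := fun q hq => ⟨htime q hq, trivial⟩
  have hPhiUsc : UpperSemicontinuousOn (fun q => u q + -φ q) (Metric.closedBall p0 r) :=
    (husc.mono hcbD).add
      ((hφC1.continuous.neg.upperSemicontinuous).upperSemicontinuousOn _)
  obtain ⟨qs, hqscb, hqsmax'⟩ :=
    usc_exists_max hcompact ⟨p0, Metric.mem_closedBall_self hr.le⟩ hPhiUsc
  have hqsmax : ∀ q ∈ Metric.closedBall p0 r, u q - φ q ≤ u qs - φ qs := by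
    intro q hq
    have := hqsmax' q hq
    linarith
  set M : ℝ := u qs - φ qs with hMdef
  have hφp0 : φ p0 = c0 := by rw [hφdef]; simp [hp0]
  have hM0 : 0 ≤ M := by
    have h := hqsmax p0 (Metric.mem_closedBall_self hr.le)
    rw [hφp0] at h
    simp only [hMdef]
    linarith
  -- the max is not on the sig-positive side
  have hside : sig * qs.2.2 ≤ 0 := by
    by_contra h
    push_neg at h
    have := hclaim1 qs hqscb h
    simp only [hMdef] at hM0
    linarith
  -- interior estimates
  have hsly : - (sig * lam * qs.2.2) ≤ lam * |qs.2.2| := by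
    have h1 : |sig * lam * qs.2.2| = lam * |qs.2.2| := by
      rw [abs_mul, abs_mul, hsigabs, abs_of_pos hlampos, one_mul]
    nlinarith [abs_nonneg (sig * lam * qs.2.2), neg_abs_le (sig * lam * qs.2.2), h1]
  have hsum : B * (qs.1 - t0) ^ 2 + B * ‖qs.2.1 - x0‖ ^ 2 + K * qs.2.2 ^ 2
      ≤ 1 + lam * |qs.2.2| := by
    have h1 : u qs < c0 + 1 := hub qs hqscb
    have h2 : 0 ≤ u qs - φ qs := by simp only [hMdef] at hM0; exact hM0
    simp only [hφdef] at h2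
    nlinarith [hsly]
  have hly : lam * |qs.2.2| ≤ 2 := by
    by_contra h
    push_neg at h
    have hz : 0 ≤ |qs.2.2| := abs_nonneg _
    have hy2 : qs.2.2 ^ 2 = |qs.2.2| ^ 2 := (sq_abs _).symm
    have h1 : 0 ≤ B * (qs.1 - t0) ^ 2 := mul_nonneg hBpos.le (sq_nonneg _)
    have h2 : 0 ≤ B * ‖qs.2.1 - x0‖ ^ 2 := mul_nonneg hBpos.le (sq_nonneg _)
    have h3 : K * |qs.2.2| ^ 2 ≤ 1 + lam * |qs.2.2| := by nlinarith [hsum]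
    have h4 : lam ^ 2 * |qs.2.2| ^ 2 ≤ K * |qs.2.2| ^ 2 :=
      mul_le_mul_of_nonneg_right hK1 (sq_nonneg _)
    nlinarith [sq_nonneg (lam * |qs.2.2| - 2)]
  have hdistlt : dist qs p0 < r := by
    have h1 : 0 ≤ B * (qs.1 - t0) ^ 2 := mul_nonneg hBpos.le (sq_nonneg _)
    have h2 : 0 ≤ B * ‖qs.2.1 - x0‖ ^ 2 := mul_nonneg hBpos.le (sq_nonneg _)
    have hy2 : qs.2.2 ^ 2 = |qs.2.2| ^ 2 := (sq_abs _).symm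
    have hKy : K * qs.2.2 ^ 2 ≤ 1 + lam * |qs.2.2| := by nlinarith [hsum]
    have hyr : |qs.2.2| ≤ r := (hcoord qs hqscb).2.2
    have hylt : |qs.2.2| < r := by
      have ha : lam * |qs.2.2| ≤ lam * r := mul_le_mul_of_nonneg_left hyr hlampos.le
      have hb : K * qs.2.2 ^ 2 < K * r ^ 2 := by linarith
      have hc : qs.2.2 ^ 2 < r ^ 2 := lt_of_mul_lt_mul_left hb hKpos.le
      nlinarith [hc, sq_abs qs.2.2, abs_nonneg qs.2.2, hr]
    have hBr : B * r ^ 2 = 6 + r ^ 2 := by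
      rw [hBdef]
      field_simp
    have htlt : |qs.1 - t0| < r := by
      have hB1 : B * (qs.1 - t0) ^ 2 ≤ 3 := by nlinarith [hsum]
      nlinarith [sq_abs (qs.1 - t0), abs_nonneg (qs.1 - t0), sq_nonneg r]
    have hxlt : ‖qs.2.1 - x0‖ < r := by
      have hB2 : B * ‖qs.2.1 - x0‖ ^ 2 ≤ 3 := by nlinarith [hsum]
      nlinarith [norm_nonneg (qs.2.1 - x0), sq_nonneg r]
    rw [Prod.dist_eq, Prod.dist_eq]
    refine max_lt ?_ (max_lt ?_ ?_)
    · simpa [Real.dist_eq] using htlt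
    · simpa [dist_eq_norm] using hxlt
    · simpa [Real.dist_eq, hp0] using hylt
  have hball : qs ∈ Metric.ball p0 r := Metric.mem_ball.2 hdistlt
  -- touching test function
  obtain ⟨φt, hφtdef⟩ : ∃ φt : ℝ × (EuclideanSpace ℝ (Fin d) × ℝ) → ℝ,
      φt = fun q => φ q + M := ⟨_, rfl⟩
  have hφtC1 : ContDiff ℝ 1 φt := by rw [hφtdef]; exact hφC1.add contDiff_const
  have heq : u (qs.1, qs.2) = φt (qs.1, qs.2) := by
    rw [hφtdef]
    simp only [hMdef]
    ring_nf
  have hev : ∀ᶠ q in nhdsWithin (qs.1, qs.2) D, u q ≤ φt q := by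
    have hmem : Metric.ball p0 r ∈ nhds qs := Metric.isOpen_ball.mem_nhds hball
    have h : ∀ᶠ q in nhds qs, u q ≤ φt q := by
      filter_upwards [hmem] with q hq
      have h2 := hqsmax q (Metric.ball_subset_closedBall hq)
      rw [hφtdef]
      simp only [hMdef] at h2 ⊢
      linarith
    exact h.filter_mono nhdsWithin_le_nhds
  obtain ⟨hcA, hcB⟩ := hsub' φt hφtC1 qs.1 qs.2 (htime qs hqscb) heq hev
  -- derivative computations
  have hdt : deriv (fun s => φt (s, qs.2)) qs.1 = 2 * B * (qs.1 - t0) := by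
    have h1 : HasDerivAt (fun s : ℝ => s - t0) 1 qs.1 := (hasDerivAt_id _).sub_const _
    have h2 : HasDerivAt (fun s : ℝ => (s - t0) ^ 2)
        ((2 : ℕ) * (qs.1 - t0) ^ (2 - 1) * 1) qs.1 := h1.pow 2
    have h3 := (((h2.const_mul B).const_add c0).add_const
        (B * ‖qs.2.1 - x0‖ ^ 2)).add_const (K * qs.2.2 ^ 2)
    have h4 := (h3.sub_const (sig * lam * qs.2.2)).add_const M
    have h5 : (fun s : ℝ => φt (s, qs.2)) =
        (fun s : ℝ => c0 + B * (s - t0) ^ 2 + B * ‖qs.2.1 - x0‖ ^ 2 + K * qs.2.2 ^ 2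
          - sig * lam * qs.2.2 + M) := by
      funext s; rw [hφtdef, hφdef]
    rw [h5, h4.deriv]
    norm_num
    ring
  have hdy : deriv (fun y => φt (qs.1, (qs.2.1, y))) qs.2.2 = 2 * K * qs.2.2 - sig * lam := by
    have h1 : HasDerivAt (fun y : ℝ => y ^ 2) ((2 : ℕ) * qs.2.2 ^ (2 - 1)) qs.2.2 :=
      hasDerivAt_pow 2 _
    have h2 := (h1.const_mul K).const_add
      (c0 + B * (qs.1 - t0) ^ 2 + B * ‖qs.2.1 - x0‖ ^ 2)
    have h3 : HasDerivAt (fun y : ℝ => sig * lam * y) (sig * lam) qs.2.2 := by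
      simpa using (hasDerivAt_id qs.2.2).const_mul (sig * lam)
    have h4 := (h2.sub h3).add_const M
    have h5 : (fun y : ℝ => φt (qs.1, (qs.2.1, y))) =
        (fun y : ℝ => c0 + B * (qs.1 - t0) ^ 2 + B * ‖qs.2.1 - x0‖ ^ 2 + K * y ^ 2
          - sig * lam * y + M) := by
      funext y; rw [hφtdef, hφdef]
    rw [h5, HasDerivAt.deriv (f := fun y : ℝ => c0 + B * (qs.1 - t0) ^ 2 + B * ‖qs.2.1 - x0‖ ^ 2 + K * y ^ 2
          - sig * lam * y + M) h4]
    norm_num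
    ring
  -- time-derivative bound
  have htbd : -(2 * B * r) ≤ 2 * B * (qs.1 - t0) := by
    have h := (hcoord qs hqscb).1
    rw [abs_le] at h
    have h2 := mul_le_mul_of_nonneg_left h.1 (by linarith : (0:ℝ) ≤ 2 * B)
    linarith [h2]
  -- final contradiction
  rcases lt_trichotomy (sig * qs.2.2) 0 with hlt | heq0 | hgt
  · have hA' := hcA hlt
    rw [hdt, hdy] at hA'
    have hderle : sig * (2 * K * qs.2.2 - sig * lam) ≤ -lam := by
      have h1 : 2 * K * (sig * qs.2.2) ≤ 0 :=
        mul_nonpos_of_nonneg_of_nonpos (by linarith) hlt.le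
      have h2 : sig * (2 * K * qs.2.2 - sig * lam)
          = 2 * K * (sig * qs.2.2) - (sig * sig) * lam := by ring
      rw [h2, hsig2, one_mul]
      linarith
    have habs2 : lam ≤ |2 * K * qs.2.2 - sig * lam| := by
      have h1 : |sig * (2 * K * qs.2.2 - sig * lam)| = |2 * K * qs.2.2 - sig * lam| := by
        rw [abs_mul, hsigabs, one_mul]
      rw [← h1]
      exact le_abs.2 (Or.inr (by linarith))
    have hnorm : RA ≤ ‖(gradient (fun y' => φt (qs.1, (y', qs.2.2))) qs.2.1,
        2 * K * qs.2.2 - sig * lam)‖ := by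
      refine hlamA.trans (habs2.trans ?_)
      rw [Prod.norm_def]
      exact le_trans (le_of_eq (Real.norm_eq_abs _).symm) (le_max_right _ _)
    have hHA := hRA _ hnorm
    linarith
  · have hy0 : qs.2.2 = 0 := by
      rcases hsig with h | h <;> rw [h] at heq0 <;> linarith
    have hB' := hcB hy0
    rw [hdt, hdy] at hB'
    have habs2 : lam ≤ |2 * K * qs.2.2 - sig * lam| := by
      rw [hy0]
      have : |2 * K * 0 - sig * lam| = lam := by
        rw [mul_zero, zero_sub, abs_neg, abs_mul, hsigabs, one_mul, abs_of_pos hlampos]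
      linarith [this.ge]
    have hnorm : RB ≤ ‖(gradient (fun y' => φt (qs.1, (y', qs.2.2))) qs.2.1,
        2 * K * qs.2.2 - sig * lam)‖ := by
      refine hlamB.trans (habs2.trans ?_)
      rw [Prod.norm_def]
      exact le_trans (le_of_eq (Real.norm_eq_abs _).symm) (le_max_right _ _)
    have hHB := hRB _ hnorm
    linarith
  · linarith [hside]



set_option maxHeartbeats 1000000 in
/-- "weak continuity" with C¹ test functions: if `u` is upper
semicontinuous on `(0,T) × ℝ^{d+1}` and every C¹ test function touching `u` from above
satisfies the three viscosity inequalities (with `H_L` below, `H_R` above and `H_0` on the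
hyperplane `{x_{d+1} = 0}`), where `H_L, H_R` are continuous quasiconvex coercive and `H_0`
is continuous coercive, then at every point of the hyperplane `u` coincides with its
one-sided upper limits from both sides. -/
theorem weak_continuity_from_viscosity (d : ℕ) (T : ℝ) (hT : 0 < T)
    (HL HR H0 : EuclideanSpace ℝ (Fin d) × ℝ → ℝ)
    (hLcont : Continuous HL) (hRcont : Continuous HR) (h0cont : Continuous H0)
    (hLqc : ∀ lam : ℝ, Convex ℝ {P : EuclideanSpace ℝ (Fin d) × ℝ | HL P ≤ lam})
    (hRqc : ∀ lam : ℝ, Convex ℝ {P : EuclideanSpace ℝ (Fin d) × ℝ | HR P ≤ lam})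
    (hLcoer : ∀ M : ℝ, ∃ R : ℝ, ∀ P : EuclideanSpace ℝ (Fin d) × ℝ, R ≤ ‖P‖ → M ≤ HL P)
    (hRcoer : ∀ M : ℝ, ∃ R : ℝ, ∀ P : EuclideanSpace ℝ (Fin d) × ℝ, R ≤ ‖P‖ → M ≤ HR P)
    (h0coer : ∀ M : ℝ, ∃ R : ℝ, ∀ P : EuclideanSpace ℝ (Fin d) × ℝ, R ≤ ‖P‖ → M ≤ H0 P)
    (u : ℝ × (EuclideanSpace ℝ (Fin d) × ℝ) → ℝ)
    (husc : UpperSemicontinuousOn u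
      (Set.Ioo 0 T ×ˢ (Set.univ : Set (EuclideanSpace ℝ (Fin d) × ℝ))))
    (hsub : ∀ φ : ℝ × (EuclideanSpace ℝ (Fin d) × ℝ) → ℝ, ContDiff ℝ 1 φ →
      ∀ (t : ℝ) (X : EuclideanSpace ℝ (Fin d) × ℝ), t ∈ Set.Ioo 0 T →
      u (t, X) = φ (t, X) →
      (∀ᶠ q in nhdsWithin (t, X)
          (Set.Ioo 0 T ×ˢ (Set.univ : Set (EuclideanSpace ℝ (Fin d) × ℝ))),
        u q ≤ φ q) →
      ((X.2 < 0 → deriv (fun s => φ (s, X)) t +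
          HL (gradient (fun y' => φ (t, (y', X.2))) X.1,
              deriv (fun y => φ (t, (X.1, y))) X.2) ≤ 0) ∧
       (0 < X.2 → deriv (fun s => φ (s, X)) t +
          HR (gradient (fun y' => φ (t, (y', X.2))) X.1,
              deriv (fun y => φ (t, (X.1, y))) X.2) ≤ 0) ∧
       (X.2 = 0 → deriv (fun s => φ (s, X)) t +
          H0 (gradient (fun y' => φ (t, (y', X.2))) X.1,
              deriv (fun y => φ (t, (X.1, y))) X.2) ≤ 0))) :
    ∀ t ∈ Set.Ioo (0 : ℝ) T, ∀ x' : EuclideanSpace ℝ (Fin d),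
      u (t, (x', 0)) = Filter.limsup u (nhdsWithin (t, (x', (0 : ℝ)))
          {q : ℝ × (EuclideanSpace ℝ (Fin d) × ℝ) | q.1 ∈ Set.Ioo 0 T ∧ 0 < q.2.2}) ∧
      u (t, (x', 0)) = Filter.limsup u (nhdsWithin (t, (x', (0 : ℝ)))
          {q : ℝ × (EuclideanSpace ℝ (Fin d) × ℝ) | q.1 ∈ Set.Ioo 0 T ∧ q.2.2 < 0}) := by
  intro t0 ht0 x0
  have hDopen : IsOpen (Set.Ioo 0 T ×ˢ (Set.univ : Set (EuclideanSpace ℝ (Fin d) × ℝ))) :=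
    isOpen_Ioo.prod isOpen_univ
  have hp0D : ((t0, (x0, (0 : ℝ))) : ℝ × (EuclideanSpace ℝ (Fin d) × ℝ))
      ∈ Set.Ioo 0 T ×ˢ (Set.univ : Set (EuclideanSpace ℝ (Fin d) × ℝ)) := ⟨ht0, trivial⟩
  have hub : ∀ δ : ℝ, 0 < δ → ∀ᶠ q in nhds ((t0, (x0, (0 : ℝ))) :
      ℝ × (EuclideanSpace ℝ (Fin d) × ℝ)), u q < u (t0, (x0, (0 : ℝ))) + δ := by
    intro δ hδ
    have h := husc _ hp0D (u (t0, (x0, (0 : ℝ))) + δ) (by linarith)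
    rwa [hDopen.nhdsWithin_eq hp0D] at h
  have hclosure : ∀ sig : ℝ, sig = 1 ∨ sig = -1 →
      (nhdsWithin ((t0, (x0, (0 : ℝ))) : ℝ × (EuclideanSpace ℝ (Fin d) × ℝ))
        {q : ℝ × (EuclideanSpace ℝ (Fin d) × ℝ) |
          q.1 ∈ Set.Ioo 0 T ∧ 0 < sig * q.2.2}).NeBot := by
    intro sig hsig
    rw [← mem_closure_iff_nhdsWithin_neBot]
    rw [Metric.mem_closure_iff]
    intro ε hε
    refine ⟨(t0, (x0, sig * (ε / 2))), ⟨ht0, ?_⟩, ?_⟩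
    · show 0 < sig * (sig * (ε / 2))
      have h2 : sig * (sig * (ε / 2)) = (sig * sig) * (ε / 2) := by ring
      rw [h2]
      rcases hsig with h | h <;> rw [h] <;> norm_num <;> linarith
    · have habs : |(0 : ℝ) - sig * (ε / 2)| = ε / 2 := by
        rw [zero_sub, abs_neg, abs_mul]
        have h1 : |sig| = 1 := by rcases hsig with h | h <;> rw [h] <;> norm_num
        rw [h1, one_mul, abs_of_pos (by linarith : (0:ℝ) < ε / 2)]
      have hd : dist ((t0, (x0, (0 : ℝ))) : ℝ × (EuclideanSpace ℝ (Fin d) × ℝ))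
          (t0, (x0, sig * (ε / 2))) = ε / 2 := by
        rw [Prod.dist_eq, Prod.dist_eq, dist_self, dist_self, Real.dist_eq, habs]
        rw [max_eq_right (by linarith : (0:ℝ) ≤ ε / 2),
          max_eq_right (by linarith : (0:ℝ) ≤ ε / 2)]
      rw [hd]
      linarith
  constructor
  · -- limit from the positive side
    have hSeq : {q : ℝ × (EuclideanSpace ℝ (Fin d) × ℝ) | q.1 ∈ Set.Ioo 0 T ∧ 0 < q.2.2}
        = {q : ℝ × (EuclideanSpace ℝ (Fin d) × ℝ) |
            q.1 ∈ Set.Ioo 0 T ∧ 0 < (1 : ℝ) * q.2.2} := by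
      ext q; simp
    rw [hSeq]
    haveI := hclosure 1 (Or.inl rfl)
    refine limsup_eq_of_freq ?_ ?_
    · intro δ hδ
      exact (hub δ hδ).filter_mono nhdsWithin_le_nhds
    · intro ε hε
      refine key_freq d T HL H0 hLcoer h0coer u husc 1 (Or.inl rfl) ?_ t0 ht0 x0 ε hε
      intro φ hφ t X htI hequ hev
      obtain ⟨h1, _, h3⟩ := hsub φ hφ t X htI hequ hev
      exact ⟨fun h => h1 (by linarith), h3⟩
  · -- limit from the negative side
    have hSeq : {q : ℝ × (EuclideanSpace ℝ (Fin d) × ℝ) | q.1 ∈ Set.Ioo 0 T ∧ q.2.2 < 0}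
        = {q : ℝ × (EuclideanSpace ℝ (Fin d) × ℝ) |
            q.1 ∈ Set.Ioo 0 T ∧ 0 < (-1 : ℝ) * q.2.2} := by
      ext q
      simp only [Set.mem_setOf_eq, and_congr_right_iff]
      intro _
      constructor <;> intro h <;> linarith
    rw [hSeq]
    haveI := hclosure (-1) (Or.inr rfl)
    refine limsup_eq_of_freq ?_ ?_
    · intro δ hδ
      exact (hub δ hδ).filter_mono nhdsWithin_le_nhds
    · intro ε hε
      refine key_freq d T HR H0 hRcoer h0coer u husc (-1) (Or.inr rfl) ?_ t0 ht0 x0 ε hε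
      intro φ hφ t X htI hequ hev
      obtain ⟨_, h2, h3⟩ := hsub φ hφ t X htI hequ hev
      exact ⟨fun h => h2 (by linarith), h3⟩
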